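/- Let F : [0,1] → [0,1] be a Lebesgue-measurable function such that for every measurable set A ⊆ [0,1], λ(A) = 0 if and only if λ(F(A)) = 0, where λ is Lebesgue measure. Then for every measurable set Y₀ ⊆ [0,1] with λ(Y₀) > 0 there exists a measurable set Y₁ ⊆ Y₀ with λ(Y₁) > 0 such that F is injective on Y₁. -/

import Mathlib

open MeasureTheory Set Filter Topology
open scoped ENNReal

lemma my_lusin (F : ℝ → ℝ) (hF_meas : Measurable F)
    (hF_maps : MapsTo F (Icc (0:ℝ) 1) (Icc (0:ℝ) 1))
    {Y₀ : Set ℝ} (hY₀sub : Y₀ ⊆ Icc (0:ℝ) 1) (hY₀meas : MeasurableSet Y₀)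
    (hY₀pos : 0 < volume Y₀) :
    ∃ K ⊆ Y₀, IsCompact K ∧ 0 < volume K ∧ ContinuousOn F K := by
  have hY₀fin : volume Y₀ ≠ ⊤ :=
    ne_top_of_le_ne_top (by simp) (measure_mono hY₀sub)
  set G : ℝ → ℝ := (Icc (0:ℝ) 1).indicator F with hGdef
  have hGmeas : Measurable G := hF_meas.indicator measurableSet_Icc
  have hGF : EqOn G F (Icc (0:ℝ) 1) := fun x hx => indicator_of_mem hx F
  have hGint : Integrable G volume := by
    rw [hGdef, integrable_indicator_iff measurableSet_Icc]
    refine Measure.integrableOn_of_bounded (M := 1) (by simp) hF_meas.aestronglyMeasurable ?_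
    refine (ae_restrict_iff' measurableSet_Icc).mpr (ae_of_all _ fun x hx => ?_)
    have := hF_maps hx
    rw [Real.norm_eq_abs, abs_le]
    exact ⟨by linarith [this.1], this.2⟩
  have hGmem : MemLp G 1 volume := memLp_one_iff_integrable.mpr hGint
  -- continuous approximations in L¹
  have H : ∀ n : ℕ, ∃ g : ℝ → ℝ, Continuous g ∧
      eLpNorm (G - g) 1 volume ≤ ((n + 1 : ℕ) : ℝ≥0∞)⁻¹ := by
    intro n
    obtain ⟨g, -, hle, hc, -⟩ := hGmem.exists_hasCompactSupport_eLpNorm_sub_le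
      (p := 1) ENNReal.one_ne_top (ε := ((n + 1 : ℕ) : ℝ≥0∞)⁻¹)
      (ENNReal.inv_ne_zero.mpr (by simp))
    exact ⟨g, hc, hle⟩
  choose g hgc hgle using H
  have htm : TendstoInMeasure volume g atTop G := by
    apply tendstoInMeasure_of_tendsto_eLpNorm (p := 1) one_ne_zero
      (fun n => (hgc n).aestronglyMeasurable) hGmeas.aestronglyMeasurable
    have h0 : Tendsto (fun n : ℕ => ((n + 1 : ℕ) : ℝ≥0∞)⁻¹) atTop (𝓝 0) :=
      ENNReal.tendsto_inv_nat_nhds_zero.comp (tendsto_add_atTop_nat 1)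
    refine tendsto_of_tendsto_of_tendsto_of_le_of_le tendsto_const_nhds h0
      (fun n => zero_le) (fun n => ?_)
    rw [eLpNorm_sub_comm]
    exact hgle n
  obtain ⟨ns, -, hae⟩ := htm.exists_seq_tendsto_ae
  -- Egorov
  have hε : (0:ℝ) < (volume Y₀).toReal / 2 :=
    half_pos (ENNReal.toReal_pos hY₀pos.ne' hY₀fin)
  obtain ⟨t, htsub, htmeas, htle, hunif⟩ :=
    tendstoUniformlyOn_of_ae_tendsto (μ := volume)
      (fun i => (hgc (ns i)).stronglyMeasurable) hGmeas.stronglyMeasurable hY₀meas hY₀fin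
      (by filter_upwards [hae] with x hx _ using hx) hε
  have hstpos : 0 < volume (Y₀ \ t) := by
    have hlt : volume t < volume Y₀ := by
      refine lt_of_le_of_lt htle ?_
      rw [ENNReal.ofReal_lt_iff_lt_toReal (by linarith) hY₀fin]
      exact half_lt_self (ENNReal.toReal_pos hY₀pos.ne' hY₀fin)
    rw [measure_diff htsub htmeas.nullMeasurableSet (ne_top_of_lt hlt)]
    exact tsub_pos_of_lt hlt
  have hGcont : ContinuousOn G (Y₀ \ t) :=
    hunif.continuousOn (Frequently.of_forall fun i => (hgc (ns i)).continuousOn)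
  have hFcont : ContinuousOn F (Y₀ \ t) :=
    hGcont.congr fun x hx => (hGF (hY₀sub hx.1)).symm
  -- inner regularity
  obtain ⟨K, hKsub, hKcomp, hKlt⟩ :=
    (hY₀meas.diff htmeas).exists_isCompact_lt_add
      (ne_top_of_le_ne_top hY₀fin (measure_mono diff_subset)) hstpos.ne'
  refine ⟨K, hKsub.trans diff_subset, hKcomp, ?_, hFcont.mono hKsub⟩
  by_contra h
  rw [not_lt, nonpos_iff_eq_zero] at h
  rw [h, zero_add] at hKlt
  exact lt_irrefl _ hKlt


lemma my_select (F : ℝ → ℝ) {K : Set ℝ} (hK : IsCompact K) (hFc : ContinuousOn F K) :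
    ∃ S ⊆ K, MeasurableSet S ∧ InjOn F S ∧ F '' S = F '' K := by
  -- Tietze extension of F from K
  obtain ⟨Gc, hGc⟩ := ContinuousMap.exists_restrict_eq (Y := ℝ) hK.isClosed
    ⟨K.restrict F, hFc.restrict⟩
  have hGF : ∀ x ∈ K, Gc x = F x := fun x hx => ContinuousMap.congr_fun hGc ⟨x, hx⟩
  set T : ℚ → ℚ → Set (ℝ × ℝ) := fun q r =>
    (K ×ˢ K) ∩ ({p : ℝ × ℝ | p.2 ≤ (q:ℝ)} ∩ {p : ℝ × ℝ | (r:ℝ) ≤ p.1} ∩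
      {p : ℝ × ℝ | Gc p.1 = Gc p.2}) with hTdef
  have hTcomp : ∀ q r, IsCompact (T q r) := by
    intro q r
    refine (hK.prod hK).inter_right ?_
    refine IsClosed.inter (IsClosed.inter ?_ ?_) ?_
    · exact isClosed_le continuous_snd continuous_const
    · exact isClosed_le continuous_const continuous_fst
    · exact isClosed_eq (Gc.continuous.comp continuous_fst)
        (Gc.continuous.comp continuous_snd)
  set bad : Set ℝ := ⋃ (q : ℚ) (r : ℚ) (_ : (q:ℝ) < (r:ℝ)), Prod.fst '' T q r with hbaddef
  have hbadmeas : MeasurableSet bad :=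
    MeasurableSet.iUnion fun q => MeasurableSet.iUnion fun r => MeasurableSet.iUnion fun _ =>
      ((hTcomp q r).image continuous_fst).measurableSet
  -- membership characterization
  have hbad_of : ∀ x ∈ K, ∀ y ∈ K, y < x → F y = F x → x ∈ bad := by
    intro x hx y hy hyx hf
    obtain ⟨q, hq1, hq2⟩ := exists_rat_btwn hyx
    obtain ⟨r, hr1, hr2⟩ := exists_rat_btwn hq2
    refine mem_iUnion.mpr ⟨q, mem_iUnion.mpr ⟨r, mem_iUnion.mpr ⟨hr1, ?_⟩⟩⟩
    exact ⟨(x, y), ⟨⟨hx, hy⟩, ⟨⟨hq1.le, hr2.le⟩, by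
      simp only [mem_setOf_eq]
      rw [hGF x hx, hGF y hy, hf]⟩⟩, rfl⟩
  have hof_bad : ∀ x ∈ bad, x ∈ K → ∃ y ∈ K, y < x ∧ F y = F x := by
    intro x hx _
    obtain ⟨q, hq⟩ := mem_iUnion.mp hx
    obtain ⟨r, hr⟩ := mem_iUnion.mp hq
    obtain ⟨hqr, hmem⟩ := mem_iUnion.mp hr
    obtain ⟨p, ⟨⟨hp1, hp2⟩, ⟨⟨hpq, hpr⟩, hpf⟩⟩, hpx⟩ := hmem
    refine ⟨p.2, hp2, ?_, ?_⟩
    · rw [← hpx]; exact lt_of_le_of_lt hpq (lt_of_lt_of_le hqr hpr)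
    · have h1 : Gc p.1 = Gc p.2 := hpf
      rw [← hGF p.2 hp2, ← h1, hGF p.1 hp1, hpx]
  refine ⟨K \ bad, diff_subset, hK.measurableSet.diff hbadmeas, ?_, ?_⟩
  · -- InjOn
    have key : ∀ a ∈ K \ bad, ∀ b ∈ K \ bad, b < a → F a ≠ F b := by
      intro a ha b hb hba hf
      exact ha.2 (hbad_of a ha.1 b hb.1 hba hf.symm)
    intro a ha b hb hf
    rcases lt_trichotomy a b with h | h | h
    · exact absurd hf.symm (key b hb a ha h)
    · exact h
    · exact absurd hf (key a ha b hb h)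
  · -- image equality
    refine Subset.antisymm (image_mono diff_subset) ?_
    rintro z ⟨x, hxK, rfl⟩
    set C : Set ℝ := K ∩ {y | Gc y = F x} with hCdef
    have hCcomp : IsCompact C := hK.inter_right (isClosed_eq Gc.continuous continuous_const)
    have hxC : x ∈ C := ⟨hxK, hGF x hxK⟩
    have hm := hCcomp.sInf_mem ⟨x, hxC⟩
    set m := sInf C
    have hmK : m ∈ K := hm.1
    have hmF : F m = F x := by rw [← hGF m hmK]; exact hm.2
    have hmS : m ∈ K \ bad := by
      refine ⟨hmK, fun hbad => ?_⟩
      obtain ⟨y, hyK, hym, hyf⟩ := hof_bad m hbad hmK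
      have hyC : y ∈ C := ⟨hyK, show Gc y = F x by rw [hGF y hyK, hyf, hmF]⟩
      exact absurd (csInf_le hCcomp.bddBelow hyC) (not_le.mpr hym)
    exact ⟨m, hmS, hmF⟩

/-- A measurable function `F : [0,1] → [0,1]` preserving null sets in both directions is
injective on a positive measure subset of any given set of positive Lebesgue measure. -/
theorem exists_posMeasure_injOn_subset
    (F : ℝ → ℝ) (hF_meas : Measurable F)
    (hF_maps : MapsTo F (Icc (0:ℝ) 1) (Icc (0:ℝ) 1))
    (hF_null : ∀ A ⊆ Icc (0:ℝ) 1, MeasurableSet A → (volume A = 0 ↔ volume (F '' A) = 0)) :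
    ∀ Y₀ ⊆ Icc (0:ℝ) 1, MeasurableSet Y₀ → 0 < volume Y₀ →
      ∃ Y₁ ⊆ Y₀, MeasurableSet Y₁ ∧ 0 < volume Y₁ ∧ InjOn F Y₁ := by
  intro Y₀ hY₀sub hY₀meas hY₀pos
  obtain ⟨K, hKsub, hKcomp, hKpos, hKcont⟩ :=
    my_lusin F hF_meas hF_maps hY₀sub hY₀meas hY₀pos
  obtain ⟨S, hSsub, hSmeas, hSinj, hSim⟩ := my_select F hKcomp hKcont
  have hKIcc : K ⊆ Icc (0:ℝ) 1 := hKsub.trans hY₀sub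
  have hSIcc : S ⊆ Icc (0:ℝ) 1 := hSsub.trans hKIcc
  have hFKpos : volume (F '' K) ≠ 0 := fun h =>
    hKpos.ne' ((hF_null K hKIcc hKcomp.measurableSet).mpr h)
  have hSpos : 0 < volume S := by
    rcases eq_or_ne (volume S) 0 with h | h
    · exact absurd (by rw [← hSim]; exact (hF_null S hSIcc hSmeas).mp h) hFKpos
    · exact pos_iff_ne_zero.mpr h
  exact ⟨S, hSsub.trans hKsub, hSmeas, hSpos, hSinj⟩
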